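/- Let 0 < p < 1 and set q* = √p/(√p + √(1−p)). Then for every q ∈ [0,1], D(q‖p) − H(q) ≥ D(q*‖p) − H(q*) = −2·log₂(√p + √(1−p)); that is, the minimum over q ∈ [0,1] of D(q‖p) − H(q) equals −2·log₂(√p + √(1−p)) and is attained at q = q*. -/
import Mathlib


open Real Set

/-- Binary entropy function (base 2), with `0 * log 0 = 0`. -/
noncomputable def binH (x : ℝ) : ℝ := -(x * Real.logb 2 x) - (1 - x) * Real.logb 2 (1 - x)

/-- Binary Kullback–Leibler divergence (base 2). -/
noncomputable def binD (q p : ℝ) : ℝ :=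
  q * Real.logb 2 (q / p) + (1 - q) * Real.logb 2 ((1 - q) / (1 - p))

lemma mul_logb_div' (q c : ℝ) (hq : 0 ≤ q) (hc : c ≠ 0) :
    q * Real.logb 2 (q / c) = q * Real.logb 2 q - q * Real.logb 2 c := by
  rcases eq_or_lt_of_le hq with h | h
  · simp [← h]
  · rw [Real.logb_div h.ne' hc]; ring

lemma key2' (x c : ℝ) (hx : 0 ≤ x) (hc : 0 < c) : x - c ≤ x * Real.log (x / c) := by
  rcases eq_or_lt_of_le hx with h | h
  · simp [← h]; linarith
  · have h1 : Real.log (c / x) ≤ c / x - 1 :=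
      Real.log_le_sub_one_of_pos (by positivity)
    have h2 : Real.log (x / c) = - Real.log (c / x) := by
      rw [← Real.log_inv, inv_div]
    have h3 : x * Real.log (c / x) ≤ x * (c / x - 1) :=
      mul_le_mul_of_nonneg_left h1 hx
    have h4 : x * (c / x - 1) = c - x := by field_simp
    nlinarith

lemma binD_nonneg' (q a : ℝ) (hq0 : 0 ≤ q) (hq1 : q ≤ 1) (ha0 : 0 < a) (ha1 : a < 1) :
    0 ≤ binD q a := by
  unfold binD
  have h2 : (0:ℝ) < Real.log 2 := Real.log_pos one_lt_two
  have e1 := key2' q a hq0 ha0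
  have e2 := key2' (1 - q) (1 - a) (by linarith) (by linarith)
  have hnum : 0 ≤ q * Real.log (q / a) + (1 - q) * Real.log ((1 - q) / (1 - a)) := by linarith
  have : q * Real.logb 2 (q / a) + (1 - q) * Real.logb 2 ((1 - q) / (1 - a)) =
      (q * Real.log (q / a) + (1 - q) * Real.log ((1 - q) / (1 - a))) / Real.log 2 := by
    rw [Real.logb, Real.logb]; ring
  rw [this]
  exact div_nonneg hnum h2.le

/-- for `0 < p < 1` and `q* = √p/(√p+√(1−p))`, the minimum over
`q ∈ [0,1]` of `D(q‖p) − H(q)` equals `−2·log₂(√p+√(1−p))` and is attained at `q*`. -/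
theorem stmt12 (p : ℝ) (hp0 : 0 < p) (hp1 : p < 1) :
    (∀ q ∈ Set.Icc (0:ℝ) 1,
      binD (Real.sqrt p / (Real.sqrt p + Real.sqrt (1 - p))) p -
          binH (Real.sqrt p / (Real.sqrt p + Real.sqrt (1 - p))) ≤ binD q p - binH q) ∧
    binD (Real.sqrt p / (Real.sqrt p + Real.sqrt (1 - p))) p -
        binH (Real.sqrt p / (Real.sqrt p + Real.sqrt (1 - p))) =
      -2 * Real.logb 2 (Real.sqrt p + Real.sqrt (1 - p)) := by
  have ha : 0 < Real.sqrt p := Real.sqrt_pos.2 hp0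
  have hb : 0 < Real.sqrt (1 - p) := Real.sqrt_pos.2 (by linarith)
  set a := Real.sqrt p with ha_def
  set b := Real.sqrt (1 - p) with hb_def
  set s := a + b with hs_def
  have hs : 0 < s := by positivity
  set t := a / s with ht_def
  have ht0 : 0 < t := by positivity
  have ht1 : t < 1 := by
    rw [ht_def, div_lt_one hs]; linarith
  have hpa : a ^ 2 = p := Real.sq_sqrt hp0.le
  have hpb : b ^ 2 = 1 - p := Real.sq_sqrt (by linarith)
  have h1t : 1 - t = b / s := by
    rw [ht_def]; field_simp; rw [hs_def]; ring
  have hat : a = t * s := by rw [ht_def]; field_simp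
  have hbt : b = (1 - t) * s := by rw [h1t]; field_simp
  have hlogp : Real.logb 2 p = 2 * (Real.logb 2 t + Real.logb 2 s) := by
    rw [← hpa, hat, ← Real.logb_mul ht0.ne' hs.ne']
    rw [show (t * s) ^ 2 = (t * s) * (t * s) by ring,
      Real.logb_mul (by positivity) (by positivity)]
    ring
  have hlog1p : Real.logb 2 (1 - p) = 2 * (Real.logb 2 (1 - t) + Real.logb 2 s) := by
    rw [← hpb, hbt, ← Real.logb_mul (by linarith : (1:ℝ) - t ≠ 0) hs.ne']
    rw [show ((1 - t) * s) ^ 2 = ((1 - t) * s) * ((1 - t) * s) by ring,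
      Real.logb_mul (mul_ne_zero (by linarith) hs.ne') (mul_ne_zero (by linarith) hs.ne')]
    ring
  have hident : ∀ q : ℝ, 0 ≤ q → q ≤ 1 →
      binD q p - binH q = 2 * binD q t - 2 * Real.logb 2 s := by
    intro q hq0 hq1
    unfold binD binH
    rw [mul_logb_div' q p hq0 hp0.ne', mul_logb_div' (1 - q) (1 - p) (by linarith) (by linarith),
      mul_logb_div' q t hq0 ht0.ne', mul_logb_div' (1 - q) (1 - t) (by linarith) (by linarith),
      hlogp, hlog1p]
    ring
  have hDtt : binD t t = 0 := by
    unfold binD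
    rw [div_self ht0.ne', div_self (by linarith : (1:ℝ) - t ≠ 0)]
    simp
  constructor
  · intro q hq
    rw [hident q hq.1 hq.2, hident t ht0.le ht1.le, hDtt]
    have := binD_nonneg' q t hq.1 hq.2 ht0 ht1
    linarith
  · rw [hident t ht0.le ht1.le, hDtt]; ring
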